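/- For any a ∈ [-1,1], the symbol A(z) = (z+1)·[[a²z+(1-a²), (1-z)a√(1-a²)],[z(1-z)a√(1-a²), (1-a²)z²+a²z]] has autocorrelation C(z) = (1/2)·A(1/z)ᵀA(z) = ((z+1)²/(2z))·I₂ for all z ≠ 0. -/

import Mathlib

open Matrix

theorem one_parameter_family_autocorrelation (a : ℝ) (ha : a ∈ Set.Icc (-1:ℝ) 1) :
    letI A : ℝ → Matrix (Fin 2) (Fin 2) ℝ := fun z =>
      (z+1) • !![a^2*z + (1-a^2), (1-z)*a*Real.sqrt (1-a^2);
                 z*(1-z)*a*Real.sqrt (1-a^2), (1-a^2)*z^2 + a^2*z]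
    ∀ z : ℝ, z ≠ 0 →
      (1/2 : ℝ) • ((A (1/z))ᵀ * A z) =
        ((z+1)^2 / (2*z)) • (1 : Matrix (Fin 2) (Fin 2) ℝ) := by
  intro z hz
  have hs : Real.sqrt (1 - a^2) ^ 2 = 1 - a^2 :=
    Real.sq_sqrt (by nlinarith [ha.1, ha.2])
  ext i j
  fin_cases i <;> fin_cases j <;>
    simp [Matrix.mul_apply, Fin.sum_univ_two, Matrix.one_apply,
      Matrix.smul_apply, Matrix.transpose_apply, Matrix.vecHead, Matrix.vecTail] <;>
    field_simp
  · linear_combination (2*a^2*z^4*(1+z)^2*(z-1)*(1-z) + a^2*(2*z^2 + z^4 - 4*z^6 + 2*z^8 - 1)) * hs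
  · ring
  · ring
  · linear_combination (2*a^2*z^5*(1+z)^2*(z-1)*(1-z) + a^2*(2*z^2 - z^4 + 2*z^5 - 4*z^7 + 2*z^9 - 1)) * hs
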